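/- Define h₀ = φ₀'/φ₀ (well defined since φ₀ > 0). Then: (1) h₀(x) ≤ 0 for all x ≥ 0, and φ₀(x) = φ₀(0)·exp(∫₀ˣ h₀(y) dy) for all x ∈ ℝ; (2) h₀ satisfies the Riccati equation h₀'(x) + h₀(x)² = μ₀² + V(x) for all x ≥ 0, together with h₀(0) = 0; (3) for all x ≥ 0 one has the integral formula h₀'(x) = −(1/φ₀(x)²)·∫ₓ^∞ V'(y)·φ₀(y)² dy. -/

import Mathlib

open Real MeasureTheory Filter

noncomputable def Qs (x : ℝ) : ℝ := (3/2) * (1 / Real.cosh (x/2))^2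
noncomputable def Hs (x : ℝ) : ℝ := Real.tanh (x/2)
noncomputable def alphaFn (x : ℝ) : ℝ := (1/3) * (Real.sinh x + x)
noncomputable def alphaInv : ℝ → ℝ := Function.invFun alphaFn
noncomputable def Qt (x : ℝ) : ℝ := Qs (alphaInv x)
noncomputable def Ht (x : ℝ) : ℝ := Hs (alphaInv x)
noncomputable def Vpot (x : ℝ) : ℝ := 2 * (Qt x)^2 * (1 - Qt x)

open Topology

noncomputable def aD (u : ℝ) : ℝ := (1/3) * (Real.cosh u + 1)

lemma aD_pos (u : ℝ) : 0 < aD u := by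
  have := Real.cosh_pos (x := u); unfold aD; linarith

lemma aD_ge (u : ℝ) : 2/3 ≤ aD u := by
  have := Real.one_le_cosh u; unfold aD; linarith

lemma alphaFn_hasDeriv (u : ℝ) : HasDerivAt alphaFn (aD u) u :=
  (((Real.hasDerivAt_sinh u).add (hasDerivAt_id u))).const_mul (1/3)

lemma alphaFn_cont : Continuous alphaFn := by
  unfold alphaFn; continuity

lemma alphaFn_mono : StrictMono alphaFn := by
  have h : ∀ x : ℝ, 0 < deriv alphaFn x := by
    intro x; rw [(alphaFn_hasDeriv x).deriv]; exact aD_pos x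
  exact strictMono_of_deriv_pos h

lemma alphaFn_surj : Function.Surjective alphaFn := by
  apply alphaFn_cont.surjective
  · apply tendsto_atTop_mono' _ _ (tendsto_id.atTop_div_const (by norm_num : (0:ℝ) < 3))
    filter_upwards [eventually_ge_atTop (0:ℝ)] with x hx
    have := Real.sinh_nonneg_iff.mpr hx
    unfold alphaFn; simp only [id]; linarith
  · apply tendsto_atBot_mono' _ _ (tendsto_id.atBot_div_const (by norm_num : (0:ℝ) < 3))
    filter_upwards [eventually_le_atBot (0:ℝ)] with x hx
    have := Real.sinh_nonpos_iff.mpr hx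
    unfold alphaFn; simp only [id]; linarith

lemma alphaInv_rightInv (y : ℝ) : alphaFn (alphaInv y) = y :=
  Function.rightInverse_invFun alphaFn_surj y

lemma alphaInv_leftInv (x : ℝ) : alphaInv (alphaFn x) = x :=
  Function.leftInverse_invFun alphaFn_mono.injective x

lemma alphaInv_zero : alphaInv 0 = 0 := by
  have : alphaFn 0 = 0 := by unfold alphaFn; simp
  conv_lhs => rw [← this]
  exact alphaInv_leftInv 0

lemma alphaInv_mono : StrictMono alphaInv := by
  intro a b hab
  by_contra h
  push_neg at h
  have := alphaFn_mono.monotone h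
  rw [alphaInv_rightInv, alphaInv_rightInv] at this
  exact absurd this (not_le.mpr hab)

lemma alphaInv_nonneg {x : ℝ} (hx : 0 ≤ x) : 0 ≤ alphaInv x := by
  have := alphaInv_mono.monotone hx
  rwa [alphaInv_zero] at this

lemma alphaInv_cont : Continuous alphaInv := by
  have he : alphaInv
      = ⇑(StrictMono.orderIsoOfSurjective alphaFn alphaFn_mono alphaFn_surj).symm := by
    funext y
    apply alphaFn_mono.injective
    rw [alphaInv_rightInv]
    have h3 := congrFun
      (StrictMono.coe_orderIsoOfSurjective alphaFn alphaFn_mono alphaFn_surj)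
      ((StrictMono.orderIsoOfSurjective alphaFn alphaFn_mono alphaFn_surj).symm y)
    rw [← h3, OrderIso.apply_symm_apply]
  rw [he]
  exact OrderIso.continuous _

lemma alphaInv_hasDeriv (x : ℝ) : HasDerivAt alphaInv (aD (alphaInv x))⁻¹ x := by
  apply HasDerivAt.of_local_left_inverse alphaInv_cont.continuousAt
    (alphaFn_hasDeriv (alphaInv x)) (ne_of_gt (aD_pos _))
  exact Filter.Eventually.of_forall alphaInv_rightInv

noncomputable def QsD (u : ℝ) : ℝ := -(3/2) * Real.sinh (u/2) / (Real.cosh (u/2))^3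

lemma Qs_hasDeriv (u : ℝ) : HasDerivAt Qs (QsD u) u := by
  have hc : HasDerivAt (fun x : ℝ => Real.cosh (x/2)) (Real.sinh (u/2) * (1/2)) u := by
    have h := (Real.hasDerivAt_cosh (u/2)).comp u ((hasDerivAt_id u).div_const 2)
    simpa [Function.comp_def] using h
  have hne : Real.cosh (u/2) ≠ 0 := ne_of_gt (Real.cosh_pos _)
  have h1 : HasDerivAt (fun x : ℝ => 1 / Real.cosh (x/2))
      ((0 * Real.cosh (u/2) - 1 * (Real.sinh (u/2) * (1/2))) / (Real.cosh (u/2))^2) u :=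
    (hasDerivAt_const u 1).div hc hne
  have h2 := (h1.pow 2).const_mul (3/2 : ℝ)
  unfold Qs
  refine h2.congr_deriv ?_
  unfold QsD
  rw [show (2:ℕ) - 1 = 1 from rfl, pow_one]
  field_simp
  ring

lemma QsD_bound (u : ℝ) : |QsD u| ≤ 3/2 := by
  have hc : (0:ℝ) < Real.cosh (u/2) := Real.cosh_pos _
  have h1 : (1:ℝ) ≤ Real.cosh (u/2) := Real.one_le_cosh _
  have hs : |Real.sinh (u/2)| ≤ Real.cosh (u/2) := by
    rw [Real.abs_sinh, ← Real.cosh_abs]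
    exact (Real.sinh_lt_cosh _).le
  unfold QsD
  rw [abs_div, abs_mul]
  have h3 : |(-(3/2):ℝ)| = 3/2 := by norm_num
  have h4 : |(Real.cosh (u/2))^3| = (Real.cosh (u/2))^3 := abs_of_pos (by positivity)
  rw [h3, h4, div_le_iff₀ (by positivity)]
  have h5 : Real.cosh (u/2) ≤ (Real.cosh (u/2))^3 := by
    nlinarith [mul_nonneg (mul_nonneg hc.le (sub_nonneg.mpr h1)) (by linarith : (0:ℝ) ≤ Real.cosh (u/2) + 1)]
  nlinarith [abs_nonneg (Real.sinh (u/2))]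

lemma QsD_cont : Continuous QsD := by
  unfold QsD
  exact (continuous_const.mul (Real.continuous_sinh.comp (continuous_id.div_const 2))).div
    ((Real.continuous_cosh.comp (continuous_id.div_const 2)).pow 3)
    (fun x => by positivity)

lemma Qs_cont : Continuous Qs := by
  unfold Qs
  exact continuous_const.mul
    (((continuous_const.div (Real.continuous_cosh.comp (continuous_id.div_const 2))
      (fun x => ne_of_gt (Real.cosh_pos _)))).pow 2)

noncomputable def QtD (x : ℝ) : ℝ := QsD (alphaInv x) * (aD (alphaInv x))⁻¹

lemma Qt_hasDeriv (x : ℝ) : HasDerivAt Qt (QtD x) x :=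
  (Qs_hasDeriv (alphaInv x)).comp x (alphaInv_hasDeriv x)

lemma Qt_cont : Continuous Qt := Qs_cont.comp alphaInv_cont

lemma aD_cont : Continuous aD := by
  unfold aD; continuity

lemma QtD_cont : Continuous QtD := by
  unfold QtD
  apply Continuous.mul
  · exact QsD_cont.comp alphaInv_cont
  · exact Continuous.inv₀ (aD_cont.comp alphaInv_cont) (fun x => ne_of_gt (aD_pos _))

lemma Qt_pos (x : ℝ) : 0 < Qt x := by
  unfold Qt Qs
  have : (0:ℝ) < Real.cosh (alphaInv x / 2) := Real.cosh_pos _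
  positivity

lemma Qt_le (x : ℝ) : Qt x ≤ 3/2 := by
  unfold Qt Qs
  have h1 : (1:ℝ) ≤ Real.cosh (alphaInv x / 2) := Real.one_le_cosh _
  have h2 : (0:ℝ) < Real.cosh (alphaInv x / 2) := Real.cosh_pos _
  have : (1:ℝ) / Real.cosh (alphaInv x / 2) ≤ 1 := by
    rw [div_le_one h2]; exact h1
  nlinarith [one_div_pos.mpr h2]

lemma QtD_bound (x : ℝ) : |QtD x| ≤ 9/4 := by
  unfold QtD
  rw [abs_mul]
  have h1 := QsD_bound (alphaInv x)
  have h2 : |(aD (alphaInv x))⁻¹| ≤ 3/2 := by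
    rw [abs_of_pos (inv_pos.mpr (aD_pos _))]
    rw [inv_le_comm₀ (aD_pos _) (by norm_num)]
    linarith [aD_ge (alphaInv x)]
  have := abs_nonneg (QsD (alphaInv x))
  have := abs_nonneg (aD (alphaInv x))⁻¹
  nlinarith

lemma Qt_anti {a b : ℝ} (ha : 0 ≤ a) (hab : a < b) : Qt b < Qt a := by
  have hu : alphaInv a < alphaInv b := alphaInv_mono hab
  have hu0 : 0 ≤ alphaInv a := alphaInv_nonneg ha
  unfold Qt Qs
  have hcc : Real.cosh (alphaInv a / 2) < Real.cosh (alphaInv b / 2) := by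
    rw [Real.cosh_lt_cosh]
    rw [abs_of_nonneg (by linarith), abs_of_nonneg (by linarith)]
    linarith
  have h1 : (0:ℝ) < Real.cosh (alphaInv a / 2) := Real.cosh_pos _
  have h2 : (0:ℝ) < Real.cosh (alphaInv b / 2) := Real.cosh_pos _
  have h3 : (1:ℝ)/Real.cosh (alphaInv b / 2) < 1/Real.cosh (alphaInv a / 2) :=
    one_div_lt_one_div_of_lt h1 hcc
  have h4 : (0:ℝ) < 1/Real.cosh (alphaInv b / 2) := by positivity
  nlinarith

noncomputable def VD (x : ℝ) : ℝ := (4 * Qt x - 6 * (Qt x)^2) * QtD x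

lemma Vpot_hasDeriv (x : ℝ) : HasDerivAt Vpot (VD x) x := by
  have h1 := Qt_hasDeriv x
  have H := (((h1.pow 2).const_mul (2:ℝ)).mul ((hasDerivAt_const x (1:ℝ)).sub h1))
  unfold Vpot
  refine H.congr_deriv ?_
  unfold VD
  simp only [Pi.sub_apply, Pi.pow_apply]
  ring

lemma deriv_Vpot : deriv Vpot = VD := funext fun x => (Vpot_hasDeriv x).deriv

lemma VD_cont : Continuous VD := by
  unfold VD
  exact ((continuous_const.mul Qt_cont).sub (continuous_const.mul (Qt_cont.pow 2))).mul QtD_cont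

lemma VD_bound (x : ℝ) : |VD x| ≤ 44 := by
  unfold VD
  rw [abs_mul]
  have h1 := Qt_pos x
  have h2 := Qt_le x
  have h3 := QtD_bound x
  have h4 : |4 * Qt x - 6 * (Qt x)^2| ≤ 39/2 := by
    rw [abs_le]; constructor <;> nlinarith
  have := abs_nonneg (QtD x)
  nlinarith [abs_nonneg (4 * Qt x - 6 * (Qt x)^2)]

lemma Vpot_bound (x : ℝ) : |Vpot x| ≤ 12 := by
  unfold Vpot
  have h1 := Qt_pos x
  have h2 := Qt_le x
  rw [abs_le]; constructor <;> nlinarith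

lemma Vpot_crossing {μ c b : ℝ} (hμ : 0 < μ) (hc : 0 ≤ c) (hcb : c < b)
    (h1 : 0 ≤ μ^2 + Vpot c) (h2 : μ^2 + Vpot b ≤ 0) : False := by
  have hq : Qt b < Qt c := Qt_anti hc hcb
  have hbpos := Qt_pos b
  have hcle := Qt_le c
  unfold Vpot at h1 h2
  have hμ2 : 0 < μ^2 := by positivity
  have hb1 : 1 < Qt b := by nlinarith [sq_nonneg (Qt b)]
  have hc1 : 1 < Qt c := lt_trans hb1 hq
  have e1 : 0 < Qt c - Qt b := sub_pos.mpr hq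
  have e2 : 0 < Qt c^2 + Qt c * Qt b + Qt b^2 - Qt c - Qt b := by nlinarith
  nlinarith [mul_pos e1 e2]

/-- Properties of the logarithmic derivative `h₀ = φ₀'/φ₀`:
sign, exponential representation of `φ₀`, the Riccati equation, and the
integral formula for `h₀'`. -/
theorem log_derivative_properties (φ₀ : ℝ → ℝ) (μ₀ : ℝ)
    (hC2 : ContDiff ℝ 2 φ₀) (hpos : ∀ x : ℝ, 0 < φ₀ x)
    (heven : ∀ x : ℝ, φ₀ (-x) = φ₀ x)
    (hL2 : Integrable (fun x => (φ₀ x)^2))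
    (hμ1 : (0.808:ℝ) ≤ μ₀) (hμ2 : μ₀ ≤ (0.883:ℝ))
    (heq : ∀ x : ℝ, -(deriv (deriv φ₀) x) + Vpot x * φ₀ x = -μ₀^2 * φ₀ x)
    (hdecay : ∃ C > (0:ℝ), ∀ x : ℝ,
      |φ₀ x| + |deriv φ₀ x| ≤ C * Real.exp (-(Real.sqrt 2 / 2) * μ₀ * |x|)) :
    (∀ x : ℝ, 0 ≤ x → deriv φ₀ x / φ₀ x ≤ 0) ∧
    (∀ x : ℝ, φ₀ x = φ₀ 0 * Real.exp (∫ y in (0:ℝ)..x, deriv φ₀ y / φ₀ y)) ∧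
    (∀ x : ℝ, 0 ≤ x →
      deriv (fun y => deriv φ₀ y / φ₀ y) x + (deriv φ₀ x / φ₀ x)^2 = μ₀^2 + Vpot x) ∧
    deriv φ₀ 0 / φ₀ 0 = 0 ∧
    (∀ x : ℝ, 0 ≤ x →
      deriv (fun y => deriv φ₀ y / φ₀ y) x
        = -(1 / (φ₀ x)^2) * ∫ y in Set.Ioi x, deriv Vpot y * (φ₀ y)^2) := by
  obtain ⟨C, hCpos, hdec⟩ := hdecay
  have hμpos : 0 < μ₀ := lt_of_lt_of_le (by norm_num) hμ1
  set κ : ℝ := Real.sqrt 2 / 2 * μ₀ with hκdef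
  have hκpos : 0 < κ := by
    have h2 : (0:ℝ) < Real.sqrt 2 := Real.sqrt_pos.mpr (by norm_num)
    positivity
  have hd1 : Differentiable ℝ φ₀ := hC2.differentiable (by norm_num)
  have hC1d : ContDiff ℝ 1 (deriv φ₀) := by
    have h2 : ContDiff ℝ ((1:ℕ)+1) φ₀ := by exact_mod_cast hC2
    exact (contDiff_succ_iff_deriv.mp h2).2.2
  have hd2 : Differentiable ℝ (deriv φ₀) := hC1d.differentiable one_ne_zero
  have hφ'cont : Continuous (deriv φ₀) := hC1d.continuous
  have hφcont : Continuous φ₀ := hd1.continuous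
  have hne : ∀ x, φ₀ x ≠ 0 := fun x => ne_of_gt (hpos x)
  have hphi2 : ∀ x, deriv (deriv φ₀) x = (μ₀^2 + Vpot x) * φ₀ x := by
    intro x
    have h := heq x
    linarith [h]
  have hder0 : deriv φ₀ 0 = 0 := by
    have hng : HasDerivAt (fun x => φ₀ (-x)) (deriv φ₀ (-0) * (-1)) 0 :=
      (hd1 (-0)).hasDerivAt.comp 0 (hasDerivAt_neg (0:ℝ))
    rw [show (fun x => φ₀ (-x)) = φ₀ from funext heven] at hng
    have h3 := hng.deriv
    rw [neg_zero] at h3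
    linarith
  have hdecφ : ∀ x : ℝ, 0 ≤ x → |φ₀ x| ≤ C * Real.exp (-(κ * x)) ∧
      |deriv φ₀ x| ≤ C * Real.exp (-(κ * x)) := by
    intro x hx
    have h := hdec x
    rw [abs_of_nonneg hx] at h
    have he : -(Real.sqrt 2/2) * μ₀ * x = -(κ*x) := by rw [hκdef]; ring
    rw [he] at h
    exact ⟨by linarith [abs_nonneg (deriv φ₀ x)], by linarith [abs_nonneg (φ₀ x)]⟩
  have hexp0 : Tendsto (fun x : ℝ => C * Real.exp (-(κ * x))) atTop (𝓝 0) := by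
    have h1 : Tendsto (fun x : ℝ => κ * x) atTop atTop :=
      Tendsto.const_mul_atTop hκpos tendsto_id
    have h2 : Tendsto (fun x : ℝ => Real.exp (-(κ * x))) atTop (𝓝 0) :=
      Real.tendsto_exp_neg_atTop_nhds_zero.comp h1
    simpa using h2.const_mul C
  have hφ0 : Tendsto φ₀ atTop (𝓝 0) := by
    apply squeeze_zero_norm' _ hexp0
    filter_upwards [eventually_ge_atTop (0:ℝ)] with x hx
    simpa [Real.norm_eq_abs] using (hdecφ x hx).1
  -- sign of the derivative on [0, ∞)
  have hsign : ∀ a : ℝ, 0 ≤ a → deriv φ₀ a ≤ 0 := by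
    intro a ha
    by_contra hcon
    push_neg at hcon
    have ha0 : a ≠ 0 := by
      intro h; rw [h, hder0] at hcon; exact lt_irrefl 0 hcon
    -- the first zero of φ₀' after a
    set B : Set ℝ := {x | a ≤ x ∧ deriv φ₀ x ≤ 0} with hB
    have hBne : B.Nonempty := by
      by_contra hB0
      have hall : ∀ x, a ≤ x → 0 < deriv φ₀ x := by
        intro x hx
        by_contra h
        push_neg at h
        exact hB0 ⟨x, hx, h⟩
      have hmono : StrictMonoOn φ₀ (Set.Ici a) := by
        apply strictMonoOn_of_deriv_pos (convex_Ici a) hφcont.continuousOn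
        intro x hx
        rw [interior_Ici] at hx
        exact hall x (le_of_lt hx)
      obtain ⟨x, hx1, hx2⟩ := ((hφ0.eventually_lt_const (hpos a)).and
        (eventually_gt_atTop a)).exists
      have := hmono Set.self_mem_Ici (le_of_lt hx2) hx2
      linarith
    have hBclosed : IsClosed B := by
      have hBeq : B = Set.Ici a ∩ {x | deriv φ₀ x ≤ 0} := by
        ext x; simp [hB, Set.mem_Ici]
      rw [hBeq]
      exact isClosed_Ici.inter (isClosed_le hφ'cont continuous_const)
    have hBbdd : BddBelow B := ⟨a, fun x hx => hx.1⟩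
    set b := sInf B with hbdef
    have hbB : b ∈ B := hBclosed.csInf_mem hBne hBbdd
    have hab : a ≤ b := hbB.1
    have haltb : a < b := lt_of_le_of_ne hab (fun h => by
      rw [← h] at hbB; linarith [hbB.2])
    have hpos_ab : ∀ x, a ≤ x → x < b → 0 < deriv φ₀ x := by
      intro x h1 h2
      by_contra h
      push_neg at h
      exact absurd (csInf_le hBbdd ⟨h1, h⟩) (not_le.mpr h2)
    have hφ'b : deriv φ₀ b = 0 := by
      refine le_antisymm hbB.2 ?_
      have ht : Tendsto (deriv φ₀) (𝓝[<] b) (𝓝 (deriv φ₀ b)) :=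
        (hφ'cont.tendsto b).mono_left nhdsWithin_le_nhds
      refine ge_of_tendsto ht ?_
      filter_upwards [Ioo_mem_nhdsLT_of_mem (⟨haltb, le_rfl⟩ : b ∈ Set.Ioc a b)] with x hx
      exact (hpos_ab x hx.1.le hx.2).le
    have hφ''b : deriv (deriv φ₀) b ≤ 0 := by
      have hD : HasDerivAt (deriv φ₀) (deriv (deriv φ₀) b) b := (hd2 b).hasDerivAt
      have hslope := hasDerivAt_iff_tendsto_slope.mp hD
      have hsub : (𝓝[<] b) ≤ (𝓝[≠] b) :=
        nhdsWithin_mono b (fun y hy => ne_of_lt hy)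
      refine le_of_tendsto (hslope.mono_left hsub) ?_
      filter_upwards [Ioo_mem_nhdsLT_of_mem (⟨haltb, le_rfl⟩ : b ∈ Set.Ioc a b)] with x hx
      have h1 : 0 < deriv φ₀ x := hpos_ab x hx.1.le hx.2
      have h2 : x - b < 0 := sub_neg.mpr hx.2
      rw [slope_def_field, hφ'b, sub_zero]
      exact div_nonpos_of_nonneg_of_nonpos h1.le h2.le
    -- the last zero of φ₀' before a
    set D : Set ℝ := {x | 0 ≤ x ∧ x ≤ a ∧ deriv φ₀ x ≤ 0} with hDdef
    have hDne : D.Nonempty := ⟨0, le_rfl, ha, le_of_eq hder0⟩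
    have hDclosed : IsClosed D := by
      have hDeq : D = Set.Ici 0 ∩ (Set.Iic a ∩ {x | deriv φ₀ x ≤ 0}) := by
        ext x
        simp only [hDdef, Set.mem_setOf_eq, Set.mem_inter_iff, Set.mem_Ici, Set.mem_Iic]
      rw [hDeq]
      exact isClosed_Ici.inter (isClosed_Iic.inter (isClosed_le hφ'cont continuous_const))
    have hDbdd : BddAbove D := ⟨a, fun x hx => hx.2.1⟩
    set c := sSup D with hcdef
    have hcD : c ∈ D := hDclosed.csSup_mem hDne hDbdd
    have hc0 : 0 ≤ c := hcD.1
    have hclta : c < a := lt_of_le_of_ne hcD.2.1 (fun h => by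
      rw [h] at hcD; linarith [hcD.2.2])
    have hpos_ca : ∀ x, c < x → x ≤ a → 0 < deriv φ₀ x := by
      intro x h1 h2
      by_contra h
      push_neg at h
      exact absurd (le_csSup hDbdd ⟨le_trans hc0 h1.le, h2, h⟩) (not_le.mpr h1)
    have hφ'c : deriv φ₀ c = 0 := by
      refine le_antisymm hcD.2.2 ?_
      have ht : Tendsto (deriv φ₀) (𝓝[>] c) (𝓝 (deriv φ₀ c)) :=
        (hφ'cont.tendsto c).mono_left nhdsWithin_le_nhds
      refine ge_of_tendsto ht ?_
      filter_upwards [Ioo_mem_nhdsGT_of_mem (⟨le_rfl, hclta⟩ : c ∈ Set.Ico c a)] with x hx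
      exact (hpos_ca x hx.1 hx.2.le).le
    have hφ''c : 0 ≤ deriv (deriv φ₀) c := by
      have hD : HasDerivAt (deriv φ₀) (deriv (deriv φ₀) c) c := (hd2 c).hasDerivAt
      have hslope := hasDerivAt_iff_tendsto_slope.mp hD
      have hsub : (𝓝[>] c) ≤ (𝓝[≠] c) :=
        nhdsWithin_mono c (fun y hy => ne_of_gt hy)
      refine ge_of_tendsto (hslope.mono_left hsub) ?_
      filter_upwards [Ioo_mem_nhdsGT_of_mem (⟨le_rfl, hclta⟩ : c ∈ Set.Ico c a)] with x hx
      have h1 : 0 < deriv φ₀ x := hpos_ca x hx.1 hx.2.le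
      have h2 : 0 < x - c := sub_pos.mpr hx.1
      rw [slope_def_field, hφ'c, sub_zero]
      positivity
    have hVb : μ₀^2 + Vpot b ≤ 0 := by
      have h2 := hφ''b
      rw [hphi2 b] at h2
      by_contra hcon'
      push_neg at hcon'
      nlinarith [hpos b]
    have hVc : 0 ≤ μ₀^2 + Vpot c := by
      have h2 := hφ''c
      rw [hphi2 c] at h2
      by_contra hcon'
      push_neg at hcon'
      nlinarith [hpos c]
    exact Vpot_crossing hμpos hc0 (lt_trans hclta haltb) hVc hVb
  -- quotient derivative
  have hquot : ∀ x : ℝ, HasDerivAt (fun y => deriv φ₀ y / φ₀ y)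
      ((deriv (deriv φ₀) x * φ₀ x - deriv φ₀ x * deriv φ₀ x) / (φ₀ x)^2) x :=
    fun x => (hd2 x).hasDerivAt.div (hd1 x).hasDerivAt (hne x)
  refine ⟨fun x hx => div_nonpos_of_nonpos_of_nonneg (hsign x hx) (hpos x).le,
    ?_, ?_, by rw [hder0, zero_div], ?_⟩
  · -- exponential representation
    intro x
    have hcontq : Continuous (fun y => deriv φ₀ y / φ₀ y) := hφ'cont.div hφcont hne
    have hint : ∫ y in (0:ℝ)..x, deriv φ₀ y / φ₀ y
        = Real.log (φ₀ x) - Real.log (φ₀ 0) :=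
      intervalIntegral.integral_eq_sub_of_hasDerivAt
        (fun y _ => (hd1 y).hasDerivAt.log (hne y)) (hcontq.intervalIntegrable 0 x)
    rw [hint, Real.exp_sub, Real.exp_log (hpos x), Real.exp_log (hpos 0),
      mul_comm (φ₀ 0) (φ₀ x / φ₀ 0), div_mul_cancel₀ _ (hne 0)]
  · -- Riccati equation
    intro x _
    rw [(hquot x).deriv, hphi2 x]
    field_simp [hne x]
    ring
  · -- integral formula
    intro x hx
    set g : ℝ → ℝ := fun y => (μ₀^2 + Vpot y) * (φ₀ y)^2 - (deriv φ₀ y)^2 with hgdef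
    have hgder : ∀ y : ℝ, HasDerivAt g (VD y * (φ₀ y)^2) y := by
      intro y
      have h1 : HasDerivAt (fun z => μ₀^2 + Vpot z) (VD y) y :=
        (Vpot_hasDeriv y).const_add (μ₀^2)
      have h2 : HasDerivAt (fun z => (φ₀ z)^2) ((2:ℕ) * φ₀ y ^ 1 * deriv φ₀ y) y :=
        (hd1 y).hasDerivAt.pow 2
      have h3 : HasDerivAt (fun z => (deriv φ₀ z)^2)
          ((2:ℕ) * deriv φ₀ y ^ 1 * deriv (deriv φ₀) y) y :=
        (hd2 y).hasDerivAt.pow 2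
      have H := (h1.mul h2).sub h3
      refine H.congr_deriv ?_
      rw [hphi2 y]
      push_cast
      ring
    have hg0 : Tendsto g atTop (𝓝 0) := by
      have htend : Tendsto (fun y : ℝ => (μ₀^2 + 13) * (C * Real.exp (-(κ * y)))^2)
          atTop (𝓝 0) := by
        have h2 := hexp0.pow 2
        simp only [ne_eq, OfNat.ofNat_ne_zero, not_false_eq_true, zero_pow] at h2
        simpa using h2.const_mul (μ₀^2 + 13)
      apply squeeze_zero_norm' _ htend
      · filter_upwards [eventually_ge_atTop (0:ℝ)] with y hy
        obtain ⟨e1, e2⟩ := hdecφ y hy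
        have hV := Vpot_bound y
        have hVabs : |μ₀^2 + Vpot y| ≤ μ₀^2 + 12 := by
          rw [abs_le] at hV ⊢
          constructor <;> [nlinarith; nlinarith]
        have hsq1 : (φ₀ y)^2 ≤ (C * Real.exp (-(κ * y)))^2 := by
          rw [← sq_abs]
          exact pow_le_pow_left₀ (abs_nonneg _) e1 2
        have hsq2 : (deriv φ₀ y)^2 ≤ (C * Real.exp (-(κ * y)))^2 := by
          rw [← sq_abs]
          exact pow_le_pow_left₀ (abs_nonneg _) e2 2
        rw [Real.norm_eq_abs]
        have htr : |g y| ≤ |μ₀^2 + Vpot y| * (φ₀ y)^2 + (deriv φ₀ y)^2 := by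
          rw [hgdef]
          calc |(μ₀^2 + Vpot y) * (φ₀ y)^2 - (deriv φ₀ y)^2|
              ≤ |(μ₀^2 + Vpot y) * (φ₀ y)^2| + |(deriv φ₀ y)^2| := abs_sub _ _
            _ = |μ₀^2 + Vpot y| * (φ₀ y)^2 + (deriv φ₀ y)^2 := by
                rw [abs_mul, abs_pow, abs_pow, sq_abs, sq_abs]
        have hμV0 : 0 ≤ |μ₀^2 + Vpot y| := abs_nonneg _
        nlinarith [sq_nonneg (φ₀ y), sq_nonneg (C * Real.exp (-(κ * y)))]
    have hVint : IntegrableOn (fun y => VD y * (φ₀ y)^2) (Set.Ioi x) := by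
      apply Integrable.mono'
        ((exp_neg_integrableOn_Ioi x (by positivity : (0:ℝ) < 2*κ)).const_mul (44*C^2))
      · exact (VD_cont.mul (hφcont.pow 2)).aestronglyMeasurable
      · rw [ae_restrict_iff' measurableSet_Ioi]
        refine ae_of_all _ (fun y hy => ?_)
        have hy0 : (0:ℝ) ≤ y := le_trans hx (le_of_lt hy)
        obtain ⟨e1, _⟩ := hdecφ y hy0
        rw [Real.norm_eq_abs, abs_mul, abs_pow]
        have h44 := VD_bound y
        have hsq : |φ₀ y|^2 ≤ (C * Real.exp (-(κ * y)))^2 :=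
          pow_le_pow_left₀ (abs_nonneg _) e1 2
        have hee : Real.exp (-(κ * y))^2 = Real.exp (-(2*κ) * y) := by
          rw [sq, ← Real.exp_add]
          ring_nf
        have hexp2 : (C * Real.exp (-(κ * y)))^2 = C^2 * Real.exp (-(2*κ) * y) := by
          rw [mul_pow, hee]
        rw [hexp2] at hsq
        have h0 : (0:ℝ) ≤ |φ₀ y|^2 := by positivity
        nlinarith [abs_nonneg (VD y), Real.exp_pos (-(2*κ)*y)]
    have hFTC : ∫ y in Set.Ioi x, VD y * (φ₀ y)^2 = 0 - g x :=
      integral_Ioi_of_hasDerivAt_of_tendsto' (fun y _ => hgder y) hVint hg0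
    rw [(hquot x).deriv]
    simp only [deriv_Vpot]
    rw [hFTC, hgdef, hphi2 x]
    field_simp
    ring
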